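/- If A is a homological Zₙ-set in a topological space X and B ⊆ A is closed in X, then B is a homological Zₙ-set in X. -/

import Mathlib

open CategoryTheory AlgebraicTopology Limits

/-- The singular chain complex of a topological space, with `ℤ` coefficients. -/
noncomputable def singularChains (X : Type) [TopologicalSpace X] :
    ChainComplex AddCommGrpCat ℕ :=
  (alternatingFaceMapComplex AddCommGrpCat).obj
    (TopCat.toSSet.obj (TopCat.of X) ⋙ AddCommGrpCat.free)

/-- The chain map induced by a continuous map. -/
noncomputable def singularChainsMap {X Y : Type} [TopologicalSpace X] [TopologicalSpace Y]
    (f : C(X, Y)) : singularChains X ⟶ singularChains Y :=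
  (alternatingFaceMapComplex AddCommGrpCat).map
    (Functor.whiskerRight (TopCat.toSSet.map (TopCat.ofHom f : TopCat.of X ⟶ TopCat.of Y)) AddCommGrpCat.free)

/-- The relative singular homology `H_k(W, V)` of a pair `(W, V)` with `V ⊆ W`,
defined as the homology of the cokernel of the map of singular chain complexes
induced by the inclusion. -/
noncomputable def relativeSingularHomology (W : Type) [TopologicalSpace W] (V : Set W)
    (k : ℕ) : AddCommGrpCat :=
  (cokernel (singularChainsMap ⟨(Subtype.val : V → W), continuous_subtype_val⟩)).homology k

/-- `A` is a homological `Z_n`-set in `X`: `A` is closed and `H_k(U, U \ A) = 0`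
for every open `U ⊆ X` and every `k ≤ n`. -/
def IsHomologicalZSet (X : Type) [TopologicalSpace X] (n : ℕ) (A : Set X) : Prop :=
  IsClosed A ∧ ∀ U : Set X, IsOpen U → ∀ k ≤ n,
    IsZero (relativeSingularHomology U {x : U | (x : X) ∉ A} k)

/-! ### Auxiliary material -/

namespace ZSetAux2

/-- The singular chain complex as a functor. -/
noncomputable def scF : TopCat ⥤ ChainComplex AddCommGrpCat ℕ :=
  TopCat.toSSet ⋙ (Functor.whiskeringRight _ _ _).obj AddCommGrpCat.free ⋙
    alternatingFaceMapComplex AddCommGrpCat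

lemma singularChainsMap_eq {X Y : Type} [TopologicalSpace X] [TopologicalSpace Y] (f : C(X,Y)) :
    singularChainsMap f = scF.map (TopCat.ofHom f) := rfl

lemma singularChainsMap_comp {X Y Z : Type} [TopologicalSpace X] [TopologicalSpace Y]
    [TopologicalSpace Z] (f : C(X,Y)) (g : C(Y,Z)) :
    singularChainsMap (g.comp f) = singularChainsMap f ≫ singularChainsMap g := by
  rw [singularChainsMap_eq, singularChainsMap_eq, singularChainsMap_eq]
  exact scF.map_comp (TopCat.ofHom f) (TopCat.ofHom g)

lemma singularChainsMap_id (X : Type) [TopologicalSpace X] :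
    singularChainsMap (ContinuousMap.id X) = 𝟙 (singularChains X) := by
  rw [singularChainsMap_eq]
  exact scF.map_id (TopCat.of X)

/-- The isomorphism of singular chain complexes induced by a homeomorphism. -/
noncomputable def homeoIso {X Y : Type} [TopologicalSpace X] [TopologicalSpace Y]
    (e : X ≃ₜ Y) : singularChains X ≅ singularChains Y where
  hom := singularChainsMap ⟨e, e.continuous_toFun⟩
  inv := singularChainsMap ⟨e.symm, e.symm.continuous_toFun⟩
  hom_inv_id := by
    rw [← singularChainsMap_comp]
    have : (ContinuousMap.mk (e.symm : Y → X) e.symm.continuous_toFun).comp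
        (ContinuousMap.mk (e : X → Y) e.continuous_toFun) = ContinuousMap.id X := by
      ext x; exact e.symm_apply_apply x
    rw [this, singularChainsMap_id]
  inv_hom_id := by
    rw [← singularChainsMap_comp]
    have : (ContinuousMap.mk (e : X → Y) e.continuous_toFun).comp
        (ContinuousMap.mk (e.symm : Y → X) e.symm.continuous_toFun) = ContinuousMap.id Y := by
      ext y; exact e.apply_symm_apply y
    rw [this, singularChainsMap_id]

lemma free_map_injective {α β : Type} {h : α → β} (hh : Function.Injective h) :
    Function.Injective (AddCommGrpCat.free.map (TypeCat.ofHom h)) := by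
  rcases isEmpty_or_nonempty α with hα | hα
  · intro x y _
    have hz : ∀ z : FreeAbelianGroup α, z = 0 := fun z => by
      induction z using FreeAbelianGroup.induction_on with
      | zero => rfl
      | of a => exact (hα.false a).elim
      | neg a ha => rw [ha, neg_zero]
      | add a b ha hb => rw [ha, hb, add_zero]
    show x = y
    rw [hz x, hz y]
  · obtain ⟨g, hg⟩ := hh.hasLeftInverse
    intro x y hxy
    have hgh : (AddCommGrpCat.free.map (TypeCat.ofHom h)) ≫ (AddCommGrpCat.free.map (TypeCat.ofHom g)) = 𝟙 _ := by
      rw [← AddCommGrpCat.free.map_comp]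
      have : TypeCat.ofHom h ≫ TypeCat.ofHom g = 𝟙 α := by ext x; exact hg x
      rw [this, AddCommGrpCat.free.map_id]
    calc x = ((AddCommGrpCat.free.map (TypeCat.ofHom h)) ≫ (AddCommGrpCat.free.map (TypeCat.ofHom g))) x := by rw [hgh]; rfl
    _ = ((AddCommGrpCat.free.map (TypeCat.ofHom h)) ≫ (AddCommGrpCat.free.map (TypeCat.ofHom g))) y := by
        show (AddCommGrpCat.free.map (TypeCat.ofHom g)) ((AddCommGrpCat.free.map (TypeCat.ofHom h)) x)
          = (AddCommGrpCat.free.map (TypeCat.ofHom g)) ((AddCommGrpCat.free.map (TypeCat.ofHom h)) y)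
        rw [hxy]
    _ = y := by rw [hgh]; rfl

lemma toSSet_app_injective {X Y : Type} [TopologicalSpace X] [TopologicalSpace Y]
    (f : C(X,Y)) (hf : Function.Injective f) (n : SimplexCategoryᵒᵖ) :
    Function.Injective ((TopCat.toSSet.map (TopCat.ofHom f)).app n) := by
  intro σ τ hst
  show σ = τ
  apply ULift.ext
  apply TopCat.hom_ext
  apply ContinuousMap.ext
  intro x
  exact hf (ConcreteCategory.congr_hom (congrArg ULift.down hst) x)

lemma mono_singularChainsMap_f {X Y : Type} [TopologicalSpace X] [TopologicalSpace Y]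
    (f : C(X,Y)) (hf : Function.Injective f) (n : ℕ) :
    Mono ((singularChainsMap f).f n) := by
  have : (singularChainsMap f).f n = AddCommGrpCat.free.map
      ((TopCat.toSSet.map (TopCat.ofHom f)).app
        (Opposite.op (SimplexCategory.mk n))) := rfl
  rw [AddCommGrpCat.mono_iff_injective]
  exact free_map_injective (toSSet_app_injective f hf _)

section Abelian

universe v u
variable {𝒜 : Type u} [Category.{v} 𝒜] [Abelian 𝒜]

/-- For `f : A ⟶ B`, `g : B ⟶ C` with `h = f ≫ g`, the sequence
`coker f ⟶ coker h ⟶ coker g`. -/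
@[reducible] noncomputable def cokerSeq {A B C : 𝒜} (f : A ⟶ B) (g : B ⟶ C) (h : A ⟶ C) (w : f ≫ g = h) :
    ShortComplex 𝒜 :=
  ShortComplex.mk
    (cokernel.desc f (g ≫ cokernel.π h) (by rw [← Category.assoc, w, cokernel.condition]))
    (cokernel.desc h (cokernel.π g) (by rw [← w, Category.assoc, cokernel.condition, comp_zero]))
    (by rw [← cancel_epi (cokernel.π f)]; simp)

lemma cokerSeq_epi_g {A B C : 𝒜} (f : A ⟶ B) (g : B ⟶ C) (h : A ⟶ C) (w : f ≫ g = h) :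
    Epi (cokerSeq f g h w).g := by
  have : cokernel.π h ≫ (cokerSeq f g h w).g = cokernel.π g := by simp [cokerSeq]
  exact epi_of_epi_fac (h := cokernel.π g) this

lemma cokerSeq_comm {A B C : 𝒜} (f : A ⟶ B) (g : B ⟶ C) (h : A ⟶ C) (w : f ≫ g = h) :
    g ≫ cokernel.π h = cokernel.π f ≫ (cokerSeq f g h w).f := by simp [cokerSeq]

/-- `coker h` is the pushout of `g` and `cokernel.π f`. -/
noncomputable def cokerSeqPushout {A B C : 𝒜} (f : A ⟶ B) (g : B ⟶ C) (h : A ⟶ C)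
    (w : f ≫ g = h) :
    IsColimit (PushoutCocone.mk (cokernel.π h) (cokerSeq f g h w).f (cokerSeq_comm f g h w)) := by
  apply PushoutCocone.IsColimit.mk
  case desc =>
    intro s
    exact cokernel.desc h s.inl (by
      have hw : h ≫ s.inl = (f ≫ g) ≫ s.inl := by rw [w]
      erw [hw, Category.assoc, s.condition, ← Category.assoc, cokernel.condition, zero_comp])
  case fac_left => intro s; simp
  case fac_right =>
    intro s
    rw [← cancel_epi (cokernel.π f), ← Category.assoc, ← cokerSeq_comm, Category.assoc,
      cokernel.π_desc, s.condition]
  case uniq =>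
    intro s m h1 h2
    rw [← cancel_epi (cokernel.π h)]
    simpa using h1

lemma cokerSeq_shortExact {A B C : 𝒜} (f : A ⟶ B) (g : B ⟶ C) (h : A ⟶ C) (w : f ≫ g = h)
    [Mono g] : (cokerSeq f g h w).ShortExact := by
  have hmono : Mono (cokerSeq f g h w).f :=
    Abelian.mono_inr_of_isColimit _ _ (cokerSeqPushout f g h w)
  have hepi : Epi (cokerSeq f g h w).g := cokerSeq_epi_g f g h w
  refine ⟨?_⟩
  · apply ShortComplex.exact_of_g_is_cokernel
    refine CokernelCofork.IsColimit.ofπ' _ _ (fun {T} k hk => ?_)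
    · refine ⟨cokernel.desc g (cokernel.π h ≫ k) ?_, ?_⟩
      · erw [← Category.assoc, cokerSeq_comm f g h w, Category.assoc, hk, comp_zero]
      · rw [← cancel_epi (cokernel.π h)]
        simp [cokerSeq]

end Abelian

end ZSetAux2

open ZSetAux2 in
/-- A subset of a homological `Zₙ`-set in `X` which is closed in `X` is itself a
homological `Zₙ`-set in `X`. -/
theorem stmt_2 (X : Type) [TopologicalSpace X] (n : ℕ) (A B : Set X)
    (hA : IsHomologicalZSet X n A) (hBA : B ⊆ A) (hB : IsClosed B) :
    IsHomologicalZSet X n B := by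
  obtain ⟨hAc, hAz⟩ := hA
  refine ⟨hB, ?_⟩
  intro U hU k hk
  -- the three spaces
  let VA : Type := ↥{x : U | (x : X) ∉ A}
  let VB : Type := ↥{x : U | (x : X) ∉ B}
  -- the chain maps
  let i01 : C(VA, VB) := ⟨fun x => ⟨x.1, fun hb => x.2 (hBA hb)⟩,
    continuous_subtype_val.subtype_mk _⟩
  let f : singularChains VA ⟶ singularChains VB := singularChainsMap i01
  let g : singularChains VB ⟶ singularChains ↥U :=
    singularChainsMap ⟨Subtype.val, continuous_subtype_val⟩
  let h : singularChains VA ⟶ singularChains ↥U :=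
    singularChainsMap ⟨Subtype.val, continuous_subtype_val⟩
  have weq : f ≫ g = h := by
    rw [show h = singularChainsMap
      ((⟨Subtype.val, continuous_subtype_val⟩ : C(VB, ↥U)).comp i01) from rfl,
      singularChainsMap_comp]
  haveI : Mono g :=
    HomologicalComplex.mono_of_mono_f g (fun i =>
      mono_singularChainsMap_f _ Subtype.val_injective i)
  set S := cokerSeq f g h weq with hSdef
  have hS : S.ShortExact := cokerSeq_shortExact f g h weq
  -- vanishing of the homology of `X₂ = coker h` (the pair `(U, U \ A)`)
  have hX2 : ∀ j ≤ n, IsZero (S.X₂.homology j) := fun j hj => hAz U hU j hj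
  -- vanishing of the homology of `X₁ = coker f` (the pair `(U \ B, U \ A)` up to homeo)
  have hX1 : ∀ j ≤ n, IsZero (S.X₁.homology j) := by
    intro j hj
    have hWopen : IsOpen (U \ B) := hU.sdiff hB
    have hz := hAz (U \ B) hWopen j hj
    -- `hz : IsZero ((cokernel vW).homology j)` with `vW` the inclusion of `(U\B) \ A`
    let W : Type := ↥(U \ B)
    let WA : Type := ↥{x : W | (x : X) ∉ A}
    let vW : singularChains WA ⟶ singularChains W :=
      singularChainsMap ⟨Subtype.val, continuous_subtype_val⟩
    -- homeomorphisms
    let e0 : VA ≃ₜ WA :=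
      { toFun := fun x => ⟨⟨x.1.1, x.1.2, fun hb => x.2 (hBA hb)⟩, x.2⟩
        invFun := fun y => ⟨⟨y.1.1, y.1.2.1⟩, y.2⟩
        left_inv := fun x => rfl
        right_inv := fun y => rfl
        continuous_toFun := by
          exact ((continuous_subtype_val.comp continuous_subtype_val).subtype_mk _).subtype_mk _
        continuous_invFun := by
          exact ((continuous_subtype_val.comp continuous_subtype_val).subtype_mk _).subtype_mk _ }
    let e1 : VB ≃ₜ W :=
      { toFun := fun x => ⟨x.1.1, x.1.2, x.2⟩
        invFun := fun y => ⟨⟨y.1, y.2.1⟩, y.2.2⟩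
        left_inv := fun x => rfl
        right_inv := fun y => rfl
        continuous_toFun := by
          exact (continuous_subtype_val.comp continuous_subtype_val).subtype_mk _
        continuous_invFun := by
          exact (continuous_subtype_val.subtype_mk _).subtype_mk _ }
    have hsquare : f ≫ (homeoIso e1).hom = (homeoIso e0).hom ≫ vW := by
      show singularChainsMap i01 ≫ singularChainsMap _ = singularChainsMap _ ≫ singularChainsMap _
      rw [← singularChainsMap_comp, ← singularChainsMap_comp]
      rfl
    have hiso : S.X₁ ≅ cokernel vW :=
      cokernel.mapIso f vW (homeoIso e0) (homeoIso e1) hsquare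
    exact IsZero.of_iso hz
      ((HomologicalComplex.homologyFunctor AddCommGrpCat (ComplexShape.down ℕ) j).mapIso hiso)
  -- conclude by the long exact sequence
  show IsZero (S.X₃.homology k)
  match k, hk with
  | 0, hk =>
    haveI : Epi (S.g.f 0) :=
      ((HomologicalComplex.shortExact_iff_degreewise_shortExact S).1 hS 0).epi_g
    haveI : Epi (HomologicalComplex.homologyMap S.g 0) :=
      HomologicalComplex.epi_homologyMap_of_epi_of_not_rel S.g 0 (by
        intro j hrel
        exact Nat.succ_ne_zero j hrel)
    exact IsZero.of_epi (HomologicalComplex.homologyMap S.g 0) (hX2 0 hk)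
  | (j+1), hk =>
    have rel : (ComplexShape.down ℕ).Rel (j+1) j := by simp
    have hex := hS.homology_exact₃ (j+1) j rel
    exact hex.isZero_X₂ ((hX2 (j+1) hk).eq_of_src _ _)
      ((hX1 j (Nat.le_of_succ_le hk)).eq_of_tgt _ _)
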